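/- The real symplectic group Sp(2g, ℝ) is generated by the subgroups N₊ = { [[I, x],[0, I]] : x a real symmetric g×g matrix } and N₋ = { [[I, 0],[x, I]] : x a real symmetric g×g matrix }. -/

import Mathlib

open Matrix Polynomial

set_option linter.unusedSectionVars false
set_option linter.unusedVariables false

namespace SpGenUnipotent

variable {l : Type*} [DecidableEq l] [Fintype l]

private lemma dp_aux (M N : Matrix l l ℝ) (x y : l → ℝ) :
    (M *ᵥ x) ⬝ᵥ (N *ᵥ y) = x ᵥ* (Mᵀ * N) ⬝ᵥ y := by
  rw [dotProduct_mulVec, show M *ᵥ x = x ᵥ* Mᵀ from (mulVec_transpose Mᵀ x).symm ▸ rfl,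
    vecMul_vecMul]

private lemma dp_self_nonneg (x : l → ℝ) : 0 ≤ x ⬝ᵥ x :=
  Finset.sum_nonneg fun i _ => mul_self_nonneg _

private lemma complex_det_ne_zero (A C : Matrix l l ℝ) (h1 : Aᵀ * C = Cᵀ * A)
    (h2 : ∀ v : l → ℝ, A *ᵥ v = 0 → C *ᵥ v = 0 → v = 0) :
    (A.map (Complex.ofReal) + Complex.I • C.map Complex.ofReal).det ≠ 0 := by
  intro hdet
  obtain ⟨v, hv0, hv⟩ := Matrix.exists_mulVec_eq_zero_iff.mpr hdet
  set u : l → ℝ := fun i => (v i).re with hu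
  set w : l → ℝ := fun i => (v i).im with hw
  have key : ∀ j, (A *ᵥ u) j - (C *ᵥ w) j = 0 ∧ (A *ᵥ w) j + (C *ᵥ u) j = 0 := by
    intro j
    have h := congrFun hv j
    simp only [Matrix.mulVec, dotProduct, Matrix.add_apply, Matrix.smul_apply,
      Matrix.map_apply, smul_eq_mul, Pi.zero_apply] at h ⊢
    constructor
    · have := congrArg Complex.re h
      simp only [Complex.re_sum, Complex.add_re, Complex.mul_re, Complex.ofReal_re,
        Complex.ofReal_im, Complex.I_re, Complex.I_im, Complex.mul_im, Complex.zero_re,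
        Complex.add_im] at this
      rw [← Finset.sum_sub_distrib]
      convert this using 2 with k
      ring
    · have := congrArg Complex.im h
      simp only [Complex.im_sum, Complex.add_im, Complex.add_re, Complex.mul_re, Complex.ofReal_re,
        Complex.ofReal_im, Complex.I_re, Complex.I_im, Complex.mul_im, Complex.zero_im] at this
      rw [← Finset.sum_add_distrib]
      convert this using 2 with k
      ring
  have hAu : A *ᵥ u = C *ᵥ w := by funext j; have := (key j).1; linarith
  have hAw : A *ᵥ w = -(C *ᵥ u) := by funext j; have := (key j).2; simp; linarith
  have e1 : (A *ᵥ u) ⬝ᵥ (A *ᵥ u) = -((C *ᵥ u) ⬝ᵥ (C *ᵥ u)) := by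
    calc (A *ᵥ u) ⬝ᵥ (A *ᵥ u) = (A *ᵥ u) ⬝ᵥ (C *ᵥ w) := by nth_rewrite 2 [hAu]; rfl
    _ = u ᵥ* (Aᵀ * C) ⬝ᵥ w := dp_aux ..
    _ = u ᵥ* (Cᵀ * A) ⬝ᵥ w := by rw [h1]
    _ = (C *ᵥ u) ⬝ᵥ (A *ᵥ w) := (dp_aux ..).symm
    _ = (C *ᵥ u) ⬝ᵥ (-(C *ᵥ u)) := by rw [← hAw]
    _ = -((C *ᵥ u) ⬝ᵥ (C *ᵥ u)) := by rw [dotProduct_neg]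
  have hAu0 : A *ᵥ u = 0 := by
    have n1 := dp_self_nonneg (A *ᵥ u); have n2 := dp_self_nonneg (C *ᵥ u)
    exact dotProduct_self_eq_zero.mp (by linarith)
  have hCu0 : C *ᵥ u = 0 := by
    have n1 := dp_self_nonneg (A *ᵥ u); have n2 := dp_self_nonneg (C *ᵥ u)
    exact dotProduct_self_eq_zero.mp (by linarith)
  have hu0 : u = 0 := h2 u hAu0 hCu0
  have hw0 : w = 0 := by
    apply h2 w
    · rw [hAw, hu0, Matrix.mulVec_zero, neg_zero]
    · rw [← hAu, hu0, Matrix.mulVec_zero]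
  apply hv0
  funext i
  have h1' : (v i).re = 0 := congrFun hu0 i
  have h2' : (v i).im = 0 := congrFun hw0 i
  exact Complex.ext h1' h2'

lemma exists_isUnit_det_add_smul (A C : Matrix l l ℝ) (h1 : Aᵀ * C = Cᵀ * A)
    (h2 : ∀ v : l → ℝ, A *ᵥ v = 0 → C *ᵥ v = 0 → v = 0) :
    ∃ t : ℝ, IsUnit (A + t • C).det := by
  classical
  set Mp : Matrix l l ℝ[X] := A.map Polynomial.C + (X : ℝ[X]) • C.map Polynomial.C with hMp
  have e1 : (Polynomial.eval₂RingHom Complex.ofRealHom Complex.I) Mp.det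
      = (A.map (Complex.ofReal) + Complex.I • C.map Complex.ofReal).det := by
    rw [RingHom.map_det]
    congr 1
    ext i j
    simp only [hMp, RingHom.mapMatrix_apply, Matrix.map_apply, Matrix.add_apply,
      Matrix.smul_apply, smul_eq_mul, coe_eval₂RingHom, eval₂_add, eval₂_C, eval₂_mul, eval₂_X,
      Complex.ofRealHom_eq_coe]
  have hp0 : Mp.det ≠ 0 := by
    intro h
    exact complex_det_ne_zero A C h1 h2 (by rw [← e1, h, map_zero])
  obtain ⟨t, ht⟩ : ∃ t, Mp.det.eval t ≠ 0 := by
    by_contra hc; push_neg at hc; exact hp0 (Polynomial.zero_of_eval_zero _ hc)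
  refine ⟨t, ?_⟩
  have e2 : (Polynomial.evalRingHom t) Mp.det = (A + t • C).det := by
    rw [RingHom.map_det]
    congr 1
    ext i j
    simp only [hMp, RingHom.mapMatrix_apply, Matrix.map_apply, Matrix.add_apply,
      Matrix.smul_apply, smul_eq_mul, coe_evalRingHom, eval_add, eval_C, eval_mul, eval_X,
      Pi.smul_apply]
  rw [isUnit_iff_ne_zero, ← e2]
  exact ht

variable {l : Type*} [DecidableEq l] [Fintype l]

lemma upper_mem_sp (x : Matrix l l ℝ) (hx : x.IsSymm) :
    fromBlocks 1 x 0 1 ∈ Matrix.symplecticGroup l ℝ := by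
  rw [SymplecticGroup.mem_iff, Matrix.J, fromBlocks_transpose, fromBlocks_multiply,
    fromBlocks_multiply]
  simp [hx.eq]

lemma lower_mem_sp (x : Matrix l l ℝ) (hx : x.IsSymm) :
    fromBlocks 1 0 x 1 ∈ Matrix.symplecticGroup l ℝ := by
  rw [SymplecticGroup.mem_iff, Matrix.J, fromBlocks_transpose, fromBlocks_multiply,
    fromBlocks_multiply]
  simp [hx.eq]

section
variable (G : Subgroup (Matrix.symplecticGroup l ℝ))

/-- The matrices underlying some element of `G`. -/
def InG (X : Matrix (l ⊕ l) (l ⊕ l) ℝ) : Prop :=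
  ∃ M : Matrix.symplecticGroup l ℝ, M ∈ G ∧ (M : Matrix (l ⊕ l) (l ⊕ l) ℝ) = X

variable {G}

lemma InG.mul {X Y : Matrix (l ⊕ l) (l ⊕ l) ℝ} (hX : InG G X) (hY : InG G Y) :
    InG G (X * Y) := by
  obtain ⟨M, hM, rfl⟩ := hX
  obtain ⟨N, hN, rfl⟩ := hY
  exact ⟨M * N, mul_mem hM hN, rfl⟩

lemma InG.of_eq {X Y : Matrix (l ⊕ l) (l ⊕ l) ℝ} (hX : InG G X) (h : X = Y) : InG G Y := h ▸ hX

variable (hNup : ∀ (x : Matrix l l ℝ) (hx : x.IsSymm),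
    (⟨fromBlocks 1 x 0 1, upper_mem_sp x hx⟩ : Matrix.symplecticGroup l ℝ) ∈ G)
variable (hNlo : ∀ (x : Matrix l l ℝ) (hx : x.IsSymm),
    (⟨fromBlocks 1 0 x 1, lower_mem_sp x hx⟩ : Matrix.symplecticGroup l ℝ) ∈ G)

include hNup in
lemma InG_upper (x : Matrix l l ℝ) (hx : x.IsSymm) : InG G (fromBlocks 1 x 0 1) :=
  ⟨_, hNup x hx, rfl⟩

include hNlo in
lemma InG_lower (x : Matrix l l ℝ) (hx : x.IsSymm) : InG G (fromBlocks 1 0 x 1) :=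
  ⟨_, hNlo x hx, rfl⟩

include hNup hNlo in
lemma InG_S (u : Matrix l l ℝ) (hu : u.IsSymm) (h : IsUnit u.det) :
    InG G (fromBlocks 0 u (-u⁻¹) 0) := by
  have hui : (u⁻¹).IsSymm := by
    rw [Matrix.IsSymm, Matrix.transpose_nonsing_inv, hu.eq]
  have h1 := ((InG_upper hNup u hu).mul (InG_lower hNlo (-u⁻¹) hui.neg)).mul
    (InG_upper hNup u hu)
  apply h1.of_eq
  rw [fromBlocks_multiply, fromBlocks_multiply]
  have e1 : u * -u⁻¹ = -1 := by rw [Matrix.mul_neg, Matrix.mul_nonsing_inv _ h]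
  have e2 : -u⁻¹ * u = -1 := by rw [Matrix.neg_mul, Matrix.nonsing_inv_mul _ h]
  simp [e1, e2]

include hNup hNlo in
lemma InG_SS (u v : Matrix l l ℝ) (hu : u.IsSymm) (hv : v.IsSymm)
    (h : IsUnit u.det) (h' : IsUnit v.det) :
    InG G (fromBlocks (-(u * v⁻¹)) 0 0 (-(u⁻¹ * v))) := by
  have h1 := (InG_S hNup hNlo u hu h).mul (InG_S hNup hNlo v hv h')
  apply h1.of_eq
  rw [fromBlocks_multiply]
  simp [Matrix.mul_neg, Matrix.neg_mul]

end

lemma stdBasis_transpose (i j : l) (c : ℝ) :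
    (Matrix.single i j c)ᵀ = Matrix.single j i c := by
  ext a b
  simp [Matrix.single, and_comm]

lemma perm_sq (i j : l) :
    ((Equiv.swap i j).permMatrix ℝ) * ((Equiv.swap i j).permMatrix ℝ) = 1 := by
  rw [Equiv.Perm.permMatrix, ← PEquiv.toMatrix_trans, ← Equiv.toPEquiv_trans]
  simp [Equiv.swap_swap]

lemma perm_symm (i j : l) : ((Equiv.swap i j).permMatrix ℝ).IsSymm := by
  ext a b
  simp only [Matrix.transpose_apply, Equiv.Perm.permMatrix, PEquiv.toMatrix_apply,
    Equiv.toPEquiv_apply, Option.mem_def, Option.some.injEq]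
  by_cases h : Equiv.swap i j b = a
  · have h' : Equiv.swap i j a = b := by rw [← h, Equiv.swap_apply_self]
    simp [h, h']
  · have h' : ¬ Equiv.swap i j a = b := fun hc => h (by rw [← hc, Equiv.swap_apply_self])
    simp [h, h']

lemma trans_mul_perm (i j : l) (hij : i ≠ j) (c : ℝ) :
    transvection i j c * (Equiv.swap i j).permMatrix ℝ
      = (Equiv.swap i j).permMatrix ℝ + Matrix.single i i c := by
  rw [transvection, Matrix.add_mul, Matrix.one_mul]
  congr 1
  rw [Equiv.Perm.permMatrix, PEquiv.mul_toMatrix_toPEquiv]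
  ext a b
  have key : (j = Equiv.swap i j b) ↔ (i = b) := by
    rw [eq_comm, Equiv.swap_apply_eq_iff, Equiv.swap_apply_right, eq_comm]
  rw [Matrix.submatrix_apply, Equiv.symm_swap]
  simp only [Matrix.single, Matrix.of_apply, id_eq, key]

lemma perm_mul_trans_mul_perm (i j : l) (hij : i ≠ j) (c : ℝ) :
    (Equiv.swap i j).permMatrix ℝ * transvection i j c * (Equiv.swap i j).permMatrix ℝ
      = transvection j i c := by
  rw [Equiv.Perm.permMatrix, Matrix.mul_assoc, PEquiv.mul_toMatrix_toPEquiv,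
    PEquiv.toMatrix_toPEquiv_mul]
  ext a b
  rw [Matrix.submatrix_apply, Matrix.submatrix_apply, Equiv.symm_swap]
  have e1 : ((Equiv.swap i j a = Equiv.swap i j b)) ↔ (a = b) :=
    ⟨fun h => (Equiv.swap i j).injective h, fun h => h ▸ rfl⟩
  have e2a : (i = Equiv.swap i j a) ↔ (j = a) := by
    rw [eq_comm, Equiv.swap_apply_eq_iff, Equiv.swap_apply_left, eq_comm]
  have e2b : (j = Equiv.swap i j b) ↔ (i = b) := by
    rw [eq_comm, Equiv.swap_apply_eq_iff, Equiv.swap_apply_right, eq_comm]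
  simp only [transvection, Matrix.add_apply, Matrix.one_apply, Matrix.single, Matrix.of_apply,
    id_eq, e1, e2a, e2b]

-- block diagonal generation
section
variable {l : Type*} [DecidableEq l] [Fintype l] {G : Subgroup (Matrix.symplecticGroup l ℝ)}

variable (hNup : ∀ (x : Matrix l l ℝ) (hx : x.IsSymm),
    (⟨fromBlocks 1 x 0 1, upper_mem_sp x hx⟩ : Matrix.symplecticGroup l ℝ) ∈ G)
variable (hNlo : ∀ (x : Matrix l l ℝ) (hx : x.IsSymm),
    (⟨fromBlocks 1 0 x 1, lower_mem_sp x hx⟩ : Matrix.symplecticGroup l ℝ) ∈ G)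

lemma InG_one : InG G (1 : Matrix (l ⊕ l) (l ⊕ l) ℝ) := ⟨1, one_mem G, rfl⟩

include hNup hNlo in
lemma InG_D_diag (d : l → ℝ) (h : IsUnit (diagonal d).det) :
    InG G (fromBlocks (diagonal d) 0 0 (((diagonal d)⁻¹)ᵀ)) := by
  have hv : (-1 : Matrix l l ℝ).IsSymm := by
    rw [Matrix.IsSymm, Matrix.transpose_neg, Matrix.transpose_one]
  have hvd : IsUnit (-1 : Matrix l l ℝ).det :=
    Matrix.isUnit_det_of_right_inverse (B := -1) (by rw [neg_mul_neg, Matrix.one_mul])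
  have vinv : (-1 : Matrix l l ℝ)⁻¹ = -1 :=
    Matrix.inv_eq_right_inv (by rw [neg_mul_neg, Matrix.one_mul])
  refine (InG_SS hNup hNlo (diagonal d) (-1) (Matrix.isSymm_diagonal d) hv h hvd).of_eq ?_
  rw [vinv, Matrix.mul_neg, Matrix.mul_one, neg_neg, Matrix.mul_neg, Matrix.mul_one, neg_neg,
    Matrix.transpose_nonsing_inv, Matrix.diagonal_transpose]

include hNup hNlo in
lemma InG_D_trans (i j : l) (hij : i ≠ j) (c : ℝ) :
    InG G (fromBlocks (transvection i j c) 0 0 (((transvection i j c)⁻¹)ᵀ)) := by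
  set P := (Equiv.swap i j).permMatrix ℝ with hP
  have hPd : IsUnit P.det := Matrix.isUnit_det_of_right_inverse (perm_sq i j)
  have Pinv : P⁻¹ = P := Matrix.inv_eq_right_inv (perm_sq i j)
  have hu : (transvection i j c * P).IsSymm := by
    rw [trans_mul_perm i j hij, Matrix.IsSymm, Matrix.transpose_add, (perm_symm i j).eq,
      stdBasis_transpose]
  have hud : IsUnit (transvection i j c * P).det := by
    rw [Matrix.det_mul, det_transvection_of_ne _ _ hij, one_mul]; exact hPd
  have hv : (-P).IsSymm := (perm_symm i j).neg
  have hvd : IsUnit (-P).det :=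
    Matrix.isUnit_det_of_right_inverse (B := -P) (by rw [neg_mul_neg, perm_sq])
  have vinv : (-P)⁻¹ = -P := Matrix.inv_eq_right_inv (by rw [neg_mul_neg, perm_sq])
  have tinv : (transvection i j c)⁻¹ = transvection i j (-c) :=
    Matrix.inv_eq_right_inv
      (by rw [transvection_mul_transvection_same _ _ hij, add_neg_cancel, transvection_zero])
  have uinv : (transvection i j c * P)⁻¹ = P * transvection i j (-c) := by
    rw [Matrix.mul_inv_rev, Pinv, tinv]
  refine (InG_SS hNup hNlo (transvection i j c * P) (-P) hu hv hud hvd).of_eq ?_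
  have e1 : -(transvection i j c * P * (-P)⁻¹) = transvection i j c := by
    rw [vinv, Matrix.mul_neg, neg_neg, Matrix.mul_assoc, perm_sq, Matrix.mul_one]
  have htr : (transvection i j (-c))ᵀ = transvection j i (-c) := by
    rw [transvection, transvection, Matrix.transpose_add, Matrix.transpose_one,
      stdBasis_transpose]
  have e2 : -((transvection i j c * P)⁻¹ * -P) = ((transvection i j c)⁻¹)ᵀ := by
    rw [uinv, Matrix.mul_neg, neg_neg, tinv, htr, ← perm_mul_trans_mul_perm i j hij (-c)]
  rw [e1, e2]

lemma InG_D_mul {A B : Matrix l l ℝ}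
    (hA : InG G (fromBlocks A 0 0 ((A⁻¹)ᵀ))) (hB : InG G (fromBlocks B 0 0 ((B⁻¹)ᵀ))) :
    InG G (fromBlocks (A * B) 0 0 (((A * B)⁻¹)ᵀ)) := by
  refine (hA.mul hB).of_eq ?_
  rw [fromBlocks_multiply, Matrix.mul_inv_rev, Matrix.transpose_mul]
  simp

include hNup hNlo in
lemma InG_D (A : Matrix l l ℝ) (h : IsUnit A.det) :
    InG G (fromBlocks A 0 0 ((A⁻¹)ᵀ)) := by
  obtain ⟨L, L', D, hA⟩ := Matrix.Pivot.exists_list_transvec_mul_diagonal_mul_list_transvec A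
  have hlist : ∀ (M : List (Matrix.TransvectionStruct l ℝ)),
      InG G (fromBlocks (M.map Matrix.TransvectionStruct.toMatrix).prod 0 0
        ((((M.map Matrix.TransvectionStruct.toMatrix).prod)⁻¹)ᵀ)) := by
    intro M
    induction M with
    | nil =>
      simp only [List.map_nil, List.prod_nil, inv_one, Matrix.transpose_one]
      exact InG_one.of_eq (by rw [← fromBlocks_one])
    | cons t M ih =>
      rw [List.map_cons, List.prod_cons]
      exact InG_D_mul (InG_D_trans hNup hNlo t.i t.j t.hij t.c) ih
  have hD : IsUnit (diagonal D).det := by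
    have : A.det = (diagonal D).det := by
      rw [hA, Matrix.det_mul, Matrix.det_mul, Matrix.TransvectionStruct.det_toMatrix_prod,
        Matrix.TransvectionStruct.det_toMatrix_prod, one_mul, mul_one]
    rwa [this] at h
  rw [hA]
  exact InG_D_mul (InG_D_mul (hlist L) (InG_D_diag hNup hNlo D hD)) (hlist L')

end

lemma sp_rel_row {A B C D : Matrix l l ℝ}
    (h : fromBlocks A B C D ∈ Matrix.symplecticGroup l ℝ) :
    A * Bᵀ = B * Aᵀ ∧ A * Dᵀ = 1 + B * Cᵀ := by
  rw [SymplecticGroup.mem_iff, Matrix.J, fromBlocks_transpose, fromBlocks_multiply,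
    fromBlocks_multiply] at h
  simp only [Matrix.mul_zero, Matrix.mul_one, Matrix.mul_neg, Matrix.neg_mul, Matrix.zero_mul,
    Matrix.one_mul, zero_add, add_zero] at h
  obtain ⟨h11, h12, -, -⟩ := Matrix.fromBlocks_inj.mp h
  constructor
  · rw [add_neg_eq_zero] at h11
    exact h11.symm
  · have h12' : A * Dᵀ - B * Cᵀ = 1 := by
      have := congrArg Neg.neg h12
      rw [neg_neg, neg_add, neg_neg, add_comm, ← sub_eq_add_neg] at this
      exact this
    rw [sub_eq_iff_eq_add] at h12'
    exact h12'

lemma sp_rel_col {A B C D : Matrix l l ℝ}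
    (h : fromBlocks A B C D ∈ Matrix.symplecticGroup l ℝ) :
    Cᵀ * A = Aᵀ * C := by
  rw [SymplecticGroup.mem_iff'] at h
  rw [Matrix.J, fromBlocks_transpose, fromBlocks_multiply, fromBlocks_multiply] at h
  simp only [Matrix.mul_zero, Matrix.mul_one, Matrix.mul_neg, Matrix.neg_mul, Matrix.zero_mul,
    Matrix.one_mul, zero_add, add_zero] at h
  obtain ⟨h11, -, -, -⟩ := Matrix.fromBlocks_inj.mp h
  rw [add_neg_eq_zero] at h11
  exact h11

lemma sp_mem (G : Subgroup (Matrix.symplecticGroup l ℝ))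
    (hNup : ∀ (x : Matrix l l ℝ) (hx : x.IsSymm),
      (⟨fromBlocks 1 x 0 1, upper_mem_sp x hx⟩ : Matrix.symplecticGroup l ℝ) ∈ G)
    (hNlo : ∀ (x : Matrix l l ℝ) (hx : x.IsSymm),
      (⟨fromBlocks 1 0 x 1, lower_mem_sp x hx⟩ : Matrix.symplecticGroup l ℝ) ∈ G)
    (M : Matrix.symplecticGroup l ℝ) : M ∈ G := by
  classical
  set A := (M : Matrix (l ⊕ l) (l ⊕ l) ℝ).toBlocks₁₁ with hA
  set B := (M : Matrix (l ⊕ l) (l ⊕ l) ℝ).toBlocks₁₂ with hB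
  set C := (M : Matrix (l ⊕ l) (l ⊕ l) ℝ).toBlocks₂₁ with hC
  set D := (M : Matrix (l ⊕ l) (l ⊕ l) ℝ).toBlocks₂₂ with hD
  have hM : (M : Matrix (l ⊕ l) (l ⊕ l) ℝ) = fromBlocks A B C D := (fromBlocks_toBlocks _).symm
  have hMsp : fromBlocks A B C D ∈ Matrix.symplecticGroup l ℝ := hM ▸ M.2
  -- step 1 : find t such that A + t • B is invertible
  have hdet : IsUnit (M : Matrix (l ⊕ l) (l ⊕ l) ℝ).det := SymplecticGroup.symplectic_det M.2
  have hdetT : IsUnit ((M : Matrix (l ⊕ l) (l ⊕ l) ℝ)ᵀ).det := by rwa [Matrix.det_transpose]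
  haveI := Matrix.invertibleOfIsUnitDet _ hdetT
  have hinj := Matrix.mulVec_injective_of_invertible ((M : Matrix (l ⊕ l) (l ⊕ l) ℝ)ᵀ)
  have h2 : ∀ v : l → ℝ, Aᵀ *ᵥ v = 0 → Bᵀ *ᵥ v = 0 → v = 0 := by
    intro v hv1 hv2
    have h0 : ((M : Matrix (l ⊕ l) (l ⊕ l) ℝ)ᵀ) *ᵥ (Sum.elim v 0) = 0 := by
      rw [hM, fromBlocks_transpose, fromBlocks_mulVec]
      funext i
      cases i with
      | inl i => simp [hv1]
      | inr i => simp [hv2]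
    have h0' : Sum.elim v 0 = (0 : l ⊕ l → ℝ) := by
      apply hinj
      rw [h0, Matrix.mulVec_zero]
    funext i
    exact congrFun h0' (Sum.inl i)
  have h1 : (Aᵀ)ᵀ * Bᵀ = (Bᵀ)ᵀ * Aᵀ := by
    rw [transpose_transpose, transpose_transpose]
    exact (sp_rel_row hMsp).1
  obtain ⟨t, hT⟩ := exists_isUnit_det_add_smul Aᵀ Bᵀ h1 h2
  -- step 2 : multiply on the right by a lower unipotent
  have htsym : (t • (1 : Matrix l l ℝ)).IsSymm := by
    rw [Matrix.IsSymm, Matrix.transpose_smul, Matrix.transpose_one]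
  have hA'T : (A + t • B)ᵀ = Aᵀ + t • Bᵀ := by
    rw [Matrix.transpose_add, Matrix.transpose_smul]
  have hA' : IsUnit (A + t • B).det := by
    rw [← Matrix.det_transpose, hA'T]
    exact hT
  have hA'Td : IsUnit ((A + t • B)ᵀ).det := by rwa [Matrix.det_transpose]
  set A' := A + t • B with hA'def
  set C' := C + t • D with hC'def
  have hM2 : (M : Matrix (l ⊕ l) (l ⊕ l) ℝ) * fromBlocks 1 0 (t • (1 : Matrix l l ℝ)) 1
      = fromBlocks A' B C' D := by
    rw [hM, fromBlocks_multiply]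
    simp only [Matrix.mul_one, Matrix.mul_zero, Matrix.mul_smul, add_zero, zero_add,
      Matrix.mul_one]
    rfl
  have hM2sp : fromBlocks A' B C' D ∈ Matrix.symplecticGroup l ℝ := by
    rw [← hM2]
    exact mul_mem M.2 (lower_mem_sp _ htsym)
  -- step 3 : relations
  obtain ⟨r1, r2⟩ := sp_rel_row hM2sp
  have r4 := sp_rel_col hM2sp
  -- step 4 : key identities
  have key : Bᵀ * (A'ᵀ)⁻¹ = A'⁻¹ * B := by
    have h5 : A' * (Bᵀ * (A'ᵀ)⁻¹) = A' * (A'⁻¹ * B) := by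
      rw [← Matrix.mul_assoc, r1, Matrix.mul_nonsing_inv_cancel_right _ _ hA'Td,
        ← Matrix.mul_assoc, Matrix.mul_nonsing_inv _ hA', Matrix.one_mul]
    have h6 := congrArg (fun X => A'⁻¹ * X) h5
    simpa only [← Matrix.mul_assoc, Matrix.nonsing_inv_mul _ hA', Matrix.one_mul] using h6
  have hz : (A'⁻¹ * B).IsSymm := by
    rw [Matrix.IsSymm, Matrix.transpose_mul, Matrix.transpose_nonsing_inv, key]
  have hy : (C' * A'⁻¹).IsSymm := by
    rw [Matrix.IsSymm, Matrix.transpose_mul, Matrix.transpose_nonsing_inv]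
    have h7 : C'ᵀ = A'ᵀ * C' * A'⁻¹ := by
      rw [← r4, Matrix.mul_nonsing_inv_cancel_right _ _ hA']
    rw [h7, ← Matrix.mul_assoc, ← Matrix.mul_assoc, Matrix.nonsing_inv_mul _ hA'Td,
      Matrix.one_mul]
  have hDeq : D = C' * (A'⁻¹ * B) + (A'⁻¹)ᵀ := by
    have h5 : Dᵀ = A'⁻¹ * (1 + B * C'ᵀ) := by
      rw [← r2, ← Matrix.mul_assoc, Matrix.nonsing_inv_mul _ hA', Matrix.one_mul]
    calc D = (Dᵀ)ᵀ := (transpose_transpose D).symm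
    _ = ((1 + B * C'ᵀ))ᵀ * (A'⁻¹)ᵀ := by rw [h5, Matrix.transpose_mul]
    _ = (1 + C' * Bᵀ) * (A'⁻¹)ᵀ := by
        rw [Matrix.transpose_add, Matrix.transpose_one, Matrix.transpose_mul,
          transpose_transpose]
    _ = (A'⁻¹)ᵀ + C' * (Bᵀ * (A'⁻¹)ᵀ) := by
        rw [Matrix.add_mul, Matrix.one_mul, Matrix.mul_assoc]
    _ = C' * (A'⁻¹ * B) + (A'⁻¹)ᵀ := by
        rw [Matrix.transpose_nonsing_inv, key, add_comm]
  -- step 5 : decomposition of fromBlocks A' B C' D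
  have hdecomp : InG G (fromBlocks A' B C' D) := by
    have h8 := ((InG_lower hNlo (C' * A'⁻¹) hy).mul (InG_D hNup hNlo A' hA')).mul
      (InG_upper hNup (A'⁻¹ * B) hz)
    apply h8.of_eq
    rw [fromBlocks_multiply, fromBlocks_multiply]
    simp only [Matrix.one_mul, Matrix.mul_one, Matrix.zero_mul, Matrix.mul_zero, add_zero,
      zero_add, Matrix.mul_nonsing_inv_cancel_left _ _ hA']
    rw [Matrix.nonsing_inv_mul_cancel_right _ _ hA', hDeq]
  -- step 6 : conclude
  have hfinal : InG G (M : Matrix (l ⊕ l) (l ⊕ l) ℝ) := by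
    have h9 := hdecomp.mul (InG_lower hNlo (-(t • (1 : Matrix l l ℝ))) htsym.neg)
    apply h9.of_eq
    rw [← hM2, Matrix.mul_assoc, fromBlocks_multiply]
    simp only [Matrix.one_mul, Matrix.mul_one, Matrix.zero_mul, Matrix.mul_zero, add_zero,
      zero_add, add_neg_cancel, fromBlocks_one]
  obtain ⟨M', hM'G, hcoe⟩ := hfinal
  exact (Subtype.ext hcoe : M' = M) ▸ hM'G

end SpGenUnipotent

/-- The real symplectic group `Sp(2g, ℝ)` is generated by the subgroups
`N₊ = { [[1, x],[0, 1]] : x symmetric }` and `N₋ = { [[1, 0],[x, 1]] : x symmetric }`. -/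
theorem sp_generated_by_unipotents (g : ℕ) :
    Subgroup.closure
      {M : Matrix.symplecticGroup (Fin g) ℝ |
        ∃ x : Matrix (Fin g) (Fin g) ℝ, x.IsSymm ∧
          ((M : Matrix (Fin g ⊕ Fin g) (Fin g ⊕ Fin g) ℝ) = Matrix.fromBlocks 1 x 0 1 ∨
           (M : Matrix (Fin g ⊕ Fin g) (Fin g ⊕ Fin g) ℝ) = Matrix.fromBlocks 1 0 x 1)} = ⊤ := by
  rw [eq_top_iff]
  intro M _
  apply SpGenUnipotent.sp_mem
  · intro x hx
    exact Subgroup.subset_closure ⟨x, hx, Or.inl rfl⟩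
  · intro x hx
    exact Subgroup.subset_closure ⟨x, hx, Or.inr rfl⟩
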